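/- arXiv:1111.1992 — 3 statements merged into one kernel-verified Lean document; each statement's English description precedes it below -/
import Mathlib

section
/- Let γ > 0 and δ ∈ [0,1]. Then D((δ+γ)/(1+γ) || γ/(1+γ)) ≥ δ²/(2γ) − δ³/(6γ²(1+γ)), where D(p||q) = p·ln(p/q) + (1−p)·ln((1−p)/(1−q)) is the binary relative entropy. -/
private lemma hdA (x : ℝ) (hx : (-1:ℝ) < x) :
    HasDerivAt (fun t => Real.log (1+t) - t + t^2/2) ((1+x)⁻¹ - 1 + x) x := by
  have h1 : HasDerivAt (fun t : ℝ => 1 + t) 1 x := (hasDerivAt_id x).const_add 1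
  have h2 : HasDerivAt (fun t => Real.log (1+t)) ((1+x)⁻¹ * 1) x :=
    (Real.hasDerivAt_log (by linarith)).comp x h1
  have h3 : HasDerivAt (fun t : ℝ => t^2/2) (2*x^1/2) x := (hasDerivAt_pow 2 x).div_const 2
  have := (h2.sub (hasDerivAt_id x)).add h3
  exact this.congr_deriv (by ring)

private lemma lemA (x : ℝ) (hx : 0 ≤ x) : x - x^2/2 ≤ Real.log (1+x) := by
  set f : ℝ → ℝ := fun t => Real.log (1+t) - t + t^2/2 with hf
  have key : MonotoneOn f (Set.Ici 0) := by
    apply monotoneOn_of_deriv_nonneg (convex_Ici 0)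
    · exact fun t ht => (hdA t (by simp at ht; linarith)).continuousAt.continuousWithinAt
    · intro t ht
      rw [interior_Ici] at ht
      exact (hdA t (by simp at ht; linarith)).differentiableAt.differentiableWithinAt
    · intro t ht
      rw [interior_Ici] at ht
      simp only [Set.mem_Ioi] at ht
      rw [(hdA t (by linarith)).deriv]
      have h : (1+t)⁻¹ - 1 + t = t^2/(1+t) := by field_simp; ring
      rw [h]; positivity
  have h0 : f 0 = 0 := by simp [hf]
  have := key (Set.self_mem_Ici) (Set.mem_Ici.mpr hx) hx
  rw [h0] at this
  simp only [hf] at this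
  linarith

private lemma hdB (x : ℝ) (hx : x < 1) :
    HasDerivAt (fun t => -t - t^2/2 - Real.log (1-t)) (-1 - x + (1-x)⁻¹) x := by
  have h1 : HasDerivAt (fun t : ℝ => 1 - t) (-1) x := by
    simpa using ((hasDerivAt_id x).const_sub 1)
  have h2 : HasDerivAt (fun t => Real.log (1-t)) ((1-x)⁻¹ * (-1)) x :=
    (Real.hasDerivAt_log (by linarith)).comp x h1
  have h3 : HasDerivAt (fun t : ℝ => t^2/2) (2*x^1/2) x := (hasDerivAt_pow 2 x).div_const 2
  have := (((hasDerivAt_id x).neg).sub h3).sub h2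
  exact this.congr_deriv (by ring)

private lemma lemB (x : ℝ) (hx0 : 0 ≤ x) (hx : x < 1) : Real.log (1-x) ≤ -x - x^2/2 := by
  set f : ℝ → ℝ := fun t => -t - t^2/2 - Real.log (1-t) with hf
  have key : MonotoneOn f (Set.Ico 0 1) := by
    apply monotoneOn_of_deriv_nonneg (convex_Ico 0 1)
    · exact fun t ht => (hdB t ht.2).continuousAt.continuousWithinAt
    · intro t ht
      rw [interior_Ico] at ht
      exact (hdB t ht.2).differentiableAt.differentiableWithinAt
    · intro t ht
      rw [interior_Ico] at ht
      rw [(hdB t ht.2).deriv]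
      have hne : (1:ℝ) - t ≠ 0 := by linarith [ht.2]
      have h : -1 - t + (1-t)⁻¹ = t^2/(1-t) := by
        field_simp
        ring
      rw [h]
      have : 0 < 1 - t := by linarith [ht.2]
      positivity
  have h0 : f 0 = 0 := by simp [hf]
  have := key (Set.mem_Ico.mpr ⟨le_refl 0, one_pos⟩) (Set.mem_Ico.mpr ⟨hx0, hx⟩) hx0
  rw [h0] at this
  simp only [hf] at this
  linarith

private lemma hdL1 (x : ℝ) (hx : (-1:ℝ) < x) :
    HasDerivAt (fun t => (1+t) * Real.log (1+t) - t - t^2/2 + t^3/6)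
      (Real.log (1+x) + 1 - 1 - x + x^2/2) x := by
  have h1 : HasDerivAt (fun t : ℝ => 1 + t) 1 x := (hasDerivAt_id x).const_add 1
  have h2 : HasDerivAt (fun t => Real.log (1+t)) ((1+x)⁻¹ * 1) x :=
    (Real.hasDerivAt_log (by linarith)).comp x h1
  have hm : HasDerivAt (fun t => (1+t) * Real.log (1+t))
      (1 * Real.log (1+x) + (1+x) * ((1+x)⁻¹ * 1)) x := h1.mul h2
  have h3 : HasDerivAt (fun t : ℝ => t^2/2) (2*x^1/2) x := (hasDerivAt_pow 2 x).div_const 2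
  have h4 : HasDerivAt (fun t : ℝ => t^3/6) (3*x^2/6) x := (hasDerivAt_pow 3 x).div_const 6
  have := ((hm.sub (hasDerivAt_id x)).sub h3).add h4
  refine this.congr_deriv ?_
  have hne : (1:ℝ) + x ≠ 0 := by linarith
  field_simp
  ring

private lemma lemL1 (x : ℝ) (hx : 0 ≤ x) :
    x + x^2/2 - x^3/6 ≤ (1+x) * Real.log (1+x) := by
  set f : ℝ → ℝ := fun t => (1+t) * Real.log (1+t) - t - t^2/2 + t^3/6 with hf
  have key : MonotoneOn f (Set.Ici 0) := by
    apply monotoneOn_of_deriv_nonneg (convex_Ici 0)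
    · exact fun t ht => (hdL1 t (by simp at ht; linarith)).continuousAt.continuousWithinAt
    · intro t ht
      rw [interior_Ici] at ht
      exact (hdL1 t (by simp at ht; linarith)).differentiableAt.differentiableWithinAt
    · intro t ht
      rw [interior_Ici] at ht
      simp only [Set.mem_Ioi] at ht
      rw [(hdL1 t (by linarith)).deriv]
      have := lemA t ht.le
      linarith
  have h0 : f 0 = 0 := by simp [hf]
  have := key (Set.self_mem_Ici) (Set.mem_Ici.mpr hx) hx
  rw [h0] at this
  simp only [hf] at this
  linarith

private lemma hdL2 (x : ℝ) (hx : x < 1) :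
    HasDerivAt (fun t => (1-t) * Real.log (1-t) + t - t^2/2 - t^3/6)
      (-Real.log (1-x) - 1 + 1 - x - x^2/2) x := by
  have h1 : HasDerivAt (fun t : ℝ => 1 - t) (-1) x := by
    simpa using ((hasDerivAt_id x).const_sub 1)
  have h2 : HasDerivAt (fun t => Real.log (1-t)) ((1-x)⁻¹ * (-1)) x :=
    (Real.hasDerivAt_log (by linarith)).comp x h1
  have hm : HasDerivAt (fun t => (1-t) * Real.log (1-t))
      ((-1) * Real.log (1-x) + (1-x) * ((1-x)⁻¹ * (-1))) x := h1.mul h2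
  have h3 : HasDerivAt (fun t : ℝ => t^2/2) (2*x^1/2) x := (hasDerivAt_pow 2 x).div_const 2
  have h4 : HasDerivAt (fun t : ℝ => t^3/6) (3*x^2/6) x := (hasDerivAt_pow 3 x).div_const 6
  have := ((hm.add (hasDerivAt_id x)).sub h3).sub h4
  refine this.congr_deriv ?_
  have hne : (1:ℝ) - x ≠ 0 := by linarith
  field_simp
  ring

private lemma lemL2 (x : ℝ) (hx0 : 0 ≤ x) (hx1 : x ≤ 1) :
    -x + x^2/2 + x^3/6 ≤ (1-x) * Real.log (1-x) := by
  rcases eq_or_lt_of_le hx1 with rfl | hx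
  · norm_num
  set f : ℝ → ℝ := fun t => (1-t) * Real.log (1-t) + t - t^2/2 - t^3/6 with hf
  have key : MonotoneOn f (Set.Ico 0 1) := by
    apply monotoneOn_of_deriv_nonneg (convex_Ico 0 1)
    · exact fun t ht => (hdL2 t ht.2).continuousAt.continuousWithinAt
    · intro t ht
      rw [interior_Ico] at ht
      exact (hdL2 t ht.2).differentiableAt.differentiableWithinAt
    · intro t ht
      rw [interior_Ico] at ht
      rw [(hdL2 t ht.2).deriv]
      have := lemB t ht.1.le ht.2
      linarith
  have h0 : f 0 = 0 := by simp [hf]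
  have := key (Set.mem_Ico.mpr ⟨le_refl 0, one_pos⟩) (Set.mem_Ico.mpr ⟨hx0, hx⟩) hx0
  rw [h0] at this
  simp only [hf] at this
  linarith

/-- Binary relative entropy (natural logarithm), with the convention
`0 · ln 0 = 0` (automatic since `Real.log 0 = 0` in Mathlib). -/
noncomputable def binKL (p q : ℝ) : ℝ :=
  p * Real.log (p / q) + (1 - p) * Real.log ((1 - p) / (1 - q))

theorem stmt_2 (γ δ : ℝ) (hγ : 0 < γ) (hδ0 : 0 ≤ δ) (hδ1 : δ ≤ 1) :
    δ ^ 2 / (2 * γ) - δ ^ 3 / (6 * γ ^ 2 * (1 + γ)) ≤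
      binKL ((δ + γ) / (1 + γ)) (γ / (1 + γ)) := by
  have hγ1 : (0:ℝ) < 1 + γ := by linarith
  have hγne : γ ≠ 0 := hγ.ne'
  have hγ1ne : (1:ℝ) + γ ≠ 0 := hγ1.ne'
  have e1 : (δ + γ) / (1 + γ) / (γ / (1 + γ)) = 1 + δ/γ := by field_simp; ring
  have e2 : (1 - (δ + γ) / (1 + γ)) / (1 - γ / (1 + γ)) = 1 - δ := by
    rw [show (1 : ℝ) - (δ + γ)/(1+γ) = (1-δ)/(1+γ) by field_simp; ring,
        show (1 : ℝ) - γ/(1+γ) = 1/(1+γ) by field_simp; ring]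
    field_simp
  have e3 : (1 : ℝ) - (δ + γ)/(1+γ) = (1-δ)/(1+γ) := by field_simp; ring
  unfold binKL
  rw [e1, e2, e3]
  set A := Real.log (1 + δ/γ) with hA_def
  set B := Real.log (1 - δ) with hB_def
  have hA := lemL1 (δ/γ) (by positivity)
  have hB := lemL2 δ hδ0 hδ1
  have haux : δ + δ^2/(2*γ) - δ^3/(6*γ^2) ≤ (δ+γ)*A := by
    have h1 : γ * (1 + δ/γ) = δ + γ := by field_simp; ring
    calc δ + δ^2/(2*γ) - δ^3/(6*γ^2) = γ * (δ/γ + (δ/γ)^2/2 - (δ/γ)^3/6) := by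
          field_simp
      _ ≤ γ * ((1 + δ/γ) * A) := mul_le_mul_of_nonneg_left hA hγ.le
      _ = (δ+γ)*A := by rw [← mul_assoc, h1]
  have hstep : (δ+γ)/(1+γ)*A + (1-δ)/(1+γ)*B = ((δ+γ)*A + (1-δ)*B)/(1+γ) := by ring
  rw [hstep, le_div_iff₀ hγ1]
  have hkey : (δ^2/(2*γ) - δ^3/(6*γ^2*(1+γ)))*(1+γ)
      = (δ + δ^2/(2*γ) - δ^3/(6*γ^2)) + (-δ + δ^2/2 + δ^3/6) - δ^3/6 := by
    field_simp; ring
  rw [hkey]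
  have hd3 : (0:ℝ) ≤ δ^3/6 := by positivity
  linarith
end

section
/- Let X₀, X₁, …, Xₙ be a real-valued martingale with respect to a filtration F₀ ⊆ F₁ ⊆ … ⊆ Fₙ such that, for some constants d, σ > 0 and every k ∈ {1,…,n}, almost surely |Xₖ − Xₖ₋₁| ≤ d and E[(Xₖ − Xₖ₋₁)² | Fₖ₋₁] ≤ σ². Set γ = σ²/d² and δ = α/d for α ≥ 0. If δ ≤ 1, then P(|Xₙ − X₀| ≥ αn) ≤ 2·exp(−n·D((δ+γ)/(1+γ) || γ/(1+γ))), where D is the binary relative entropy with natural logarithm. -/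
open MeasureTheory

noncomputable def expS (x : ℝ) : ℝ := ∑' n : ℕ, x ^ n / ((n+2).factorial)

lemma summable_expS (x : ℝ) : Summable (fun n : ℕ => x ^ n / (((n+2).factorial) : ℝ)) := by
  apply Summable.of_norm_bounded (Real.summable_pow_div_factorial |x|)
  intro n
  rw [norm_div, norm_pow, Real.norm_eq_abs, Real.norm_eq_abs,
    abs_of_nonneg (by positivity : (0:ℝ) ≤ (((n+2).factorial : ℕ) : ℝ))]
  apply div_le_div_of_nonneg_left ?_ ?_ ?_
  · positivity
  · exact_mod_cast Nat.factorial_pos n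
  · exact_mod_cast Nat.factorial_le (by omega)

lemma real_exp_eq_tsum (x : ℝ) : Real.exp x = ∑' n : ℕ, x ^ n / (n.factorial) := by
  rw [Real.exp_eq_exp_ℝ, NormedSpace.exp_eq_tsum_div]

lemma exp_eq_expS (x : ℝ) : Real.exp x = 1 + x + x ^ 2 * expS x := by
  have hs : Summable (fun n : ℕ => x ^ n / ((n.factorial) : ℝ)) := Real.summable_pow_div_factorial x
  have h2 := Summable.sum_add_tsum_nat_add (f := fun n : ℕ => x ^ n / ((n.factorial) : ℝ)) 2 hs
  rw [real_exp_eq_tsum, ← h2]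
  rw [expS, ← tsum_mul_left]
  congr 1
  · simp [Finset.sum_range_succ]
  · apply tsum_congr; intro n
    rw [pow_add]; ring


lemma expS_mono {u T : ℝ} (hu : 0 ≤ u) (huT : u ≤ T) : expS u ≤ expS T := by
  apply Summable.tsum_le_tsum _ (summable_expS u) (summable_expS T)
  intro n
  have : (0:ℝ) < ((n+2).factorial : ℝ) := by exact_mod_cast Nat.factorial_pos _
  gcongr

lemma expS_ge_half {T : ℝ} (hT : 0 ≤ T) : (1:ℝ)/2 ≤ expS T := by
  have h := Summable.le_tsum (summable_expS T) 0 (fun i _ => by positivity)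
  simpa [expS] using h

lemma exp_le_quad_of_nonpos {u : ℝ} (hu : u ≤ 0) : Real.exp u ≤ 1 + u + u^2/2 := by
  have hv : 0 ≤ -u := by linarith
  have h3 : 1 + (-u) + (-u)^2/2 ≤ Real.exp (-u) := by
    have := Real.sum_le_exp_of_nonneg hv 3
    simp [Finset.sum_range_succ] at this
    nlinarith [this]
  have hpos : (0:ℝ) < 1 + (-u) + (-u)^2/2 := by nlinarith
  have hinv : Real.exp u * Real.exp (-u) = 1 := by
    rw [← Real.exp_add]; simp
  nlinarith [Real.exp_pos u, sq_nonneg (u^2)]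

lemma exp_le_quadS {u T : ℝ} (hu : u ≤ T) (hT : 0 ≤ T) :
    Real.exp u ≤ 1 + u + expS T * u^2 := by
  rcases le_or_gt u 0 with h | h
  · have h1 := exp_le_quad_of_nonpos h
    have h2 := expS_ge_half hT
    nlinarith [sq_nonneg u]
  · rw [exp_eq_expS u]
    have := expS_mono h.le hu
    nlinarith [sq_nonneg u]

noncomputable def phi (γ d t : ℝ) : ℝ :=
  (γ * Real.exp (t*d) + Real.exp (-(t*γ*d))) / (1+γ)

noncomputable def qa0 (γ d t : ℝ) : ℝ :=
  Real.exp (-(t*γ*d)) * (1 + t*γ*d + expS (t*(d*(1+γ))) * t^2 * γ^2 * d^2)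
noncomputable def qa1 (γ d t : ℝ) : ℝ :=
  Real.exp (-(t*γ*d)) * (t + 2 * expS (t*(d*(1+γ))) * t^2 * γ * d)
noncomputable def qa2 (γ d t : ℝ) : ℝ :=
  Real.exp (-(t*γ*d)) * expS (t*(d*(1+γ))) * t^2

lemma qa2_nonneg {γ d t : ℝ} (hγ : 0 < γ) (hd : 0 < d) (ht : 0 ≤ t) : 0 ≤ qa2 γ d t := by
  have h := expS_ge_half (by positivity : (0:ℝ) ≤ t*(d*(1+γ)))
  unfold qa2
  positivity

lemma exp_le_quad_poly {γ d t : ℝ} (hγ : 0 < γ) (hd : 0 < d) (ht : 0 ≤ t) {y : ℝ} (hy : y ≤ d) :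
    Real.exp (t*y) ≤ qa0 γ d t + qa1 γ d t * y + qa2 γ d t * y^2 := by
  have hE : Real.exp (t*y) = Real.exp (-(t*γ*d)) * Real.exp (t*(y+γ*d)) := by
    rw [← Real.exp_add]; ring_nf
  have hu : t*(y+γ*d) ≤ t*(d*(1+γ)) := by
    apply mul_le_mul_of_nonneg_left _ ht
    nlinarith
  have hT : 0 ≤ t*(d*(1+γ)) := by positivity
  have key := exp_le_quadS hu hT
  have hEpos := Real.exp_pos (-(t*γ*d))
  rw [hE]
  have := mul_le_mul_of_nonneg_left key hEpos.le
  refine this.trans_eq ?_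
  unfold qa0 qa1 qa2
  ring

lemma quad_mean {γ d t : ℝ} (hγ : 0 < γ) (hd : 0 < d) (ht : 0 ≤ t) :
    qa0 γ d t + qa2 γ d t * (γ * d^2) = phi γ d t := by
  have hTev : expS (t*(d*(1+γ))) * (t*(d*(1+γ)))^2
      = Real.exp (t*(d*(1+γ))) - 1 - (t*(d*(1+γ))) := by
    have h := exp_eq_expS (t*(d*(1+γ)))
    linarith
  have hEe : Real.exp (-(t*γ*d)) * Real.exp (t*(d*(1+γ))) = Real.exp (t*d) := by
    rw [← Real.exp_add]; ring_nf
  have h1γ : (1+γ) ≠ 0 := by positivity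
  unfold qa0 qa2 phi
  field_simp
  linear_combination (norm := ring_nf) (Real.exp (-(t*γ*d)) * γ) * hTev + γ * hEe

section Prob
variable {Ω : Type*} {m0 : MeasurableSpace Ω} {μ : Measure Ω}
  [IsProbabilityMeasure μ] {ℱ : Filtration ℕ m0} {X : ℕ → Ω → ℝ}

lemma integrable_of_ae_bound {f : Ω → ℝ} (hf : AEStronglyMeasurable f μ) {C : ℝ}
    (h : ∀ᵐ ω ∂μ, |f ω| ≤ C) : Integrable f μ :=
  memLp_one_iff_integrable.mp (MemLp.of_bound hf C (by simpa [Real.norm_eq_abs] using h))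

lemma cond_mgf (hX : Martingale X ℱ μ) {γ d t : ℝ} (hγ : 0 < γ) (hd : 0 < d) (ht : 0 ≤ t)
    (k : ℕ) (hk : 1 ≤ k)
    (hb : ∀ᵐ ω ∂μ, |X k ω - X (k - 1) ω| ≤ d)
    (hv : ∀ᵐ ω ∂μ, (μ[fun ω' => (X k ω' - X (k - 1) ω') ^ 2 | ℱ (k - 1)]) ω ≤ γ * d ^ 2) :
    μ[fun ω => Real.exp (t * (X k ω - X (k - 1) ω)) | ℱ (k - 1)] ≤ᵐ[μ]
      fun _ => phi γ d t := by
  set m := ℱ (k - 1) with hmdef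
  have hm : m ≤ m0 := ℱ.le _
  have hYsm : StronglyMeasurable[m0] (fun ω => X k ω - X (k - 1) ω) :=
    ((hX.stronglyMeasurable k).mono (ℱ.le k)).sub
      ((hX.stronglyMeasurable (k - 1)).mono (ℱ.le (k - 1)))
  have hYint : Integrable (fun ω => X k ω - X (k - 1) ω) μ :=
    (hX.integrable k).sub (hX.integrable (k - 1))
  have hY2int : Integrable (fun ω => (X k ω - X (k - 1) ω) ^ 2) μ := by
    refine integrable_of_ae_bound (C := d ^ 2)
      ((hYsm.pow 2).aestronglyMeasurable) ?_
    filter_upwards [hb] with ω hω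
    rw [abs_pow]
    exact pow_le_pow_left₀ (abs_nonneg _) hω 2
  have hexpint : Integrable (fun ω => Real.exp (t * (X k ω - X (k - 1) ω))) μ := by
    refine integrable_of_ae_bound (C := Real.exp (t * d))
      ((Real.continuous_exp.comp_stronglyMeasurable (hYsm.const_mul t)).aestronglyMeasurable) ?_
    filter_upwards [hb] with ω hω
    rw [abs_of_pos (Real.exp_pos _), Real.exp_le_exp]
    exact mul_le_mul_of_nonneg_left (le_of_abs_le hω) ht
  have hqint : Integrable
      (fun ω => qa0 γ d t + qa1 γ d t * (X k ω - X (k - 1) ω)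
        + qa2 γ d t * (X k ω - X (k - 1) ω) ^ 2) μ :=
    ((integrable_const _).add (hYint.const_mul _)).add (hY2int.const_mul _)
  -- conditional expectation of the increment is 0
  have hc0 : μ[fun ω => X k ω - X (k - 1) ω|m] =ᵐ[μ] fun _ => (0 : ℝ) := by
    have h1 : μ[X k|m] =ᵐ[μ] X (k - 1) := hX.condExp_ae_eq (Nat.sub_le k 1)
    have h2 : μ[X (k - 1)|m] = X (k - 1) :=
      condExp_of_stronglyMeasurable hm (hX.stronglyAdapted (k - 1)) (hX.integrable (k - 1))
    have h3 : μ[X k - X (k - 1)|m] =ᵐ[μ] μ[X k|m] - μ[X (k - 1)|m] :=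
      condExp_sub (hX.integrable k) (hX.integrable (k - 1)) m
    have h4 : (fun ω => X k ω - X (k - 1) ω) = X k - X (k - 1) := rfl
    rw [h4]
    filter_upwards [h1, h3] with ω h1ω h3ω
    have h2ω := congrFun h2 ω
    simp only [Pi.sub_apply] at h3ω ⊢
    simp [h3ω, h1ω, h2ω]
  -- conditional expectation of the quadratic dominating function
  have hsplit : μ[fun ω => qa0 γ d t + qa1 γ d t * (X k ω - X (k - 1) ω)
        + qa2 γ d t * (X k ω - X (k - 1) ω) ^ 2|m] ≤ᵐ[μ]
      fun _ => phi γ d t := by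
    have e1 : (fun ω => qa0 γ d t + qa1 γ d t * (X k ω - X (k - 1) ω)
          + qa2 γ d t * (X k ω - X (k - 1) ω) ^ 2)
        = (fun ω => qa0 γ d t + qa1 γ d t * (X k ω - X (k - 1) ω))
          + (qa2 γ d t • fun ω => (X k ω - X (k - 1) ω) ^ 2) := rfl
    have e2 : (fun ω => qa0 γ d t + qa1 γ d t * (X k ω - X (k - 1) ω))
        = (fun _ : Ω => qa0 γ d t) + (qa1 γ d t • fun ω => X k ω - X (k - 1) ω) := rfl
    rw [e1, e2]
    have i1 : Integrable ((fun _ : Ω => qa0 γ d t)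
        + (qa1 γ d t • fun ω => X k ω - X (k - 1) ω)) μ :=
      (integrable_const _).add (hYint.smul _)
    have i2 : Integrable (qa2 γ d t • fun ω => (X k ω - X (k - 1) ω) ^ 2) μ := hY2int.smul _
    have hadd1 := condExp_add (m := m) i1 i2
    have hadd2 := condExp_add (m := m) (integrable_const (qa0 γ d t)) (hYint.smul (qa1 γ d t))
    have hs1 := condExp_smul (m := m) (μ := μ) (qa1 γ d t) (fun ω => X k ω - X (k - 1) ω)
    have hs2 := condExp_smul (m := m) (μ := μ) (qa2 γ d t) (fun ω => (X k ω - X (k - 1) ω) ^ 2)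
    have hconst := condExp_const (μ := μ) hm (qa0 γ d t)
    filter_upwards [hadd1, hadd2, hs1, hs2, hc0, hv] with ω w1 w2 w3 w4 w5 w6
    have hcω := congrFun hconst ω
    have hq2 : 0 ≤ qa2 γ d t := qa2_nonneg hγ hd ht
    have hqm := quad_mean (γ := γ) (d := d) (t := t) hγ hd ht
    simp only [Pi.add_apply, Pi.smul_apply, smul_eq_mul] at w1 w2 w3 w4 ⊢
    rw [w1, w2, w3, w4, hcω, w5]
    have h6 : qa2 γ d t * (μ[fun ω' => (X k ω' - X (k - 1) ω') ^ 2|m]) ω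
        ≤ qa2 γ d t * (γ * d ^ 2) := mul_le_mul_of_nonneg_left w6 hq2
    simp only [mul_zero, add_zero]
    linarith
  refine (condExp_mono hexpint hqint ?_).trans hsplit
  filter_upwards [hb] with ω hω
  exact exp_le_quad_poly hγ hd ht (le_of_abs_le hω)

lemma phi_pos {γ d t : ℝ} (hγ : 0 < γ) : 0 < phi γ d t := by
  unfold phi
  positivity

lemma chernoff_aux (hX : Martingale X ℱ μ) (n : ℕ) {γ d : ℝ} (hγ : 0 < γ) (hd : 0 < d)
    (hbdd : ∀ k, 1 ≤ k → k ≤ n → ∀ᵐ ω ∂μ, |X k ω - X (k - 1) ω| ≤ d)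
    (hvar : ∀ k, 1 ≤ k → k ≤ n →
      ∀ᵐ ω ∂μ, (μ[fun ω' => (X k ω' - X (k - 1) ω') ^ 2 | ℱ (k - 1)]) ω ≤ γ * d ^ 2)
    {α : ℝ} (hα : 0 ≤ α) {t : ℝ} (ht : 0 ≤ t) :
    μ {ω | α * n ≤ X n ω - X 0 ω} ≤
      ENNReal.ofReal ((Real.exp (-(t * α)) * phi γ d t) ^ n) := by
  -- a.e. bound on |X k - X 0|
  have hbdd0 : ∀ k, k ≤ n → ∀ᵐ ω ∂μ, |X k ω - X 0 ω| ≤ k * d := by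
    intro k
    induction k with
    | zero => intro _; filter_upwards with ω; simp
    | succ k ih =>
      intro hkn
      have h1 := ih (by omega)
      have h2 := hbdd (k + 1) (by omega) hkn
      filter_upwards [h1, h2] with ω w1 w2
      have : X (k + 1) ω - X 0 ω = (X (k + 1) ω - X (k + 1 - 1) ω) + (X k ω - X 0 ω) := by
        simp
      rw [this]
      calc |(X (k + 1) ω - X (k + 1 - 1) ω) + (X k ω - X 0 ω)|
          ≤ |X (k + 1) ω - X (k + 1 - 1) ω| + |X k ω - X 0 ω| := abs_add_le _ _
        _ ≤ d + k * d := add_le_add w2 w1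
        _ = (k + 1 : ℕ) * d := by push_cast; ring
  -- strong measurability of partial increments
  have hsm : ∀ k : ℕ, StronglyMeasurable[ℱ k] (fun ω => Real.exp (t * (X k ω - X 0 ω))) := by
    intro k
    exact Real.continuous_exp.comp_stronglyMeasurable
      (((hX.stronglyAdapted k).sub ((hX.stronglyAdapted 0).mono (ℱ.mono (Nat.zero_le k)))).const_mul t)
  have hintk : ∀ k, k ≤ n → Integrable (fun ω => Real.exp (t * (X k ω - X 0 ω))) μ := by
    intro k hk
    refine integrable_of_ae_bound (C := Real.exp (t * (k * d)))
      (((hsm k).mono (ℱ.le k)).aestronglyMeasurable) ?_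
    filter_upwards [hbdd0 k hk] with ω hω
    rw [abs_of_pos (Real.exp_pos _), Real.exp_le_exp]
    have : X k ω - X 0 ω ≤ k * d := le_of_abs_le hω
    exact mul_le_mul_of_nonneg_left this ht
  -- the key integral bound by induction
  have hkey : ∀ k, k ≤ n →
      (∫ ω, Real.exp (t * (X k ω - X 0 ω)) ∂μ) ≤ (phi γ d t) ^ k := by
    intro k
    induction k with
    | zero =>
      intro _
      simp
    | succ k ih =>
      intro hkn
      have ihk := ih (by omega)
      have hfint := hintk k (by omega)
      have hgint : Integrable (fun ω => Real.exp (t * (X (k + 1) ω - X k ω))) μ := by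
        refine integrable_of_ae_bound (C := Real.exp (t * d))
          ((Real.continuous_exp.comp_stronglyMeasurable
            ((((hX.stronglyMeasurable (k + 1)).mono (ℱ.le _)).sub
              ((hX.stronglyMeasurable k).mono (ℱ.le _))).const_mul t)).aestronglyMeasurable) ?_
        filter_upwards [hbdd (k + 1) (by omega) hkn] with ω hω
        rw [abs_of_pos (Real.exp_pos _), Real.exp_le_exp]
        simp only [Nat.add_sub_cancel] at hω
        exact mul_le_mul_of_nonneg_left (le_of_abs_le hω) ht
      have hfgeq : (fun ω => Real.exp (t * (X (k + 1) ω - X 0 ω)))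
          = (fun ω => Real.exp (t * (X k ω - X 0 ω)))
            * (fun ω => Real.exp (t * (X (k + 1) ω - X k ω))) := by
        funext ω
        simp only [Pi.mul_apply, ← Real.exp_add]
        ring_nf
      have hfgint : Integrable ((fun ω => Real.exp (t * (X k ω - X 0 ω)))
          * (fun ω => Real.exp (t * (X (k + 1) ω - X k ω)))) μ := by
        rw [← hfgeq]; exact hintk (k + 1) hkn
      have pull := condExp_mul_of_stronglyMeasurable_left (hsm k) hfgint hgint
      have condg : μ[fun ω => Real.exp (t * (X (k + 1) ω - X k ω))|ℱ k] ≤ᵐ[μ]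
          fun _ => phi γ d t := by
        have := cond_mgf hX hγ hd ht (k + 1) (by omega)
          (hbdd (k + 1) (by omega) hkn) (hvar (k + 1) (by omega) hkn)
        simpa only [Nat.add_sub_cancel] using this
      calc ∫ ω, Real.exp (t * (X (k + 1) ω - X 0 ω)) ∂μ
          = ∫ ω, ((fun ω => Real.exp (t * (X k ω - X 0 ω)))
            * (fun ω => Real.exp (t * (X (k + 1) ω - X k ω)))) ω ∂μ := by rw [← hfgeq]
        _ = ∫ ω, (μ[(fun ω => Real.exp (t * (X k ω - X 0 ω)))
            * (fun ω => Real.exp (t * (X (k + 1) ω - X k ω)))|ℱ k]) ω ∂μ :=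
            (integral_condExp (ℱ.le k)).symm
        _ = ∫ ω, Real.exp (t * (X k ω - X 0 ω))
              * (μ[fun ω => Real.exp (t * (X (k + 1) ω - X k ω))|ℱ k]) ω ∂μ := by
            refine integral_congr_ae ?_
            filter_upwards [pull] with ω hω
            simpa using hω
        _ ≤ ∫ ω, Real.exp (t * (X k ω - X 0 ω)) * phi γ d t ∂μ := by
            refine integral_mono_ae ?_ (hfint.mul_const _) ?_
            · have hcint : Integrable (μ[(fun ω => Real.exp (t * (X k ω - X 0 ω)))
                  * (fun ω => Real.exp (t * (X (k + 1) ω - X k ω)))|ℱ k]) μ := integrable_condExp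
              exact hcint.congr pull
            · filter_upwards [condg] with ω hω
              exact mul_le_mul_of_nonneg_left hω (Real.exp_pos _).le
        _ = (∫ ω, Real.exp (t * (X k ω - X 0 ω)) ∂μ) * phi γ d t := by
            rw [integral_mul_const]
        _ ≤ (phi γ d t) ^ k * phi γ d t :=
            mul_le_mul_of_nonneg_right ihk (phi_pos hγ).le
        _ = (phi γ d t) ^ (k + 1) := by ring
  -- Chernoff
  have hmgf := ProbabilityTheory.measure_ge_le_exp_mul_mgf (μ := μ)
    (X := fun ω => X n ω - X 0 ω) (α * n) ht (hintk n le_rfl)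
  have hmgf2 : (μ {ω | α * n ≤ X n ω - X 0 ω}).toReal
      ≤ (Real.exp (-(t * α)) * phi γ d t) ^ n := by
    refine hmgf.trans ?_
    rw [ProbabilityTheory.mgf]
    have h1 : Real.exp (-t * (α * n)) ≤ Real.exp (-(t * α)) ^ n := by
      rw [← Real.exp_nat_mul, Real.exp_le_exp]
      ring_nf
      exact le_rfl
    calc Real.exp (-t * (α * n)) * ∫ ω, Real.exp (t * (X n ω - X 0 ω)) ∂μ
        ≤ Real.exp (-(t * α)) ^ n * (phi γ d t) ^ n := by
          refine mul_le_mul h1 (hkey n le_rfl) ?_ (by positivity)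
          exact integral_nonneg fun ω => (Real.exp_pos _).le
      _ = (Real.exp (-(t * α)) * phi γ d t) ^ n := by rw [mul_pow]
  rw [← ENNReal.ofReal_toReal (measure_ne_top μ _)]
  exact ENNReal.ofReal_le_ofReal hmgf2

end Prob

lemma opt_t {γ d δ : ℝ} (hγ : 0 < γ) (hd : 0 < d) (hδ0 : 0 ≤ δ) (hδ1 : δ < 1) :
    ∃ t : ℝ, 0 ≤ t ∧ Real.exp (-(t * (δ * d))) * phi γ d t
      = Real.exp (-(binKL ((δ + γ) / (1 + γ)) (γ / (1 + γ)))) := by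
  have h1γ : (0:ℝ) < 1 + γ := by linarith
  have h1δ : (0:ℝ) < 1 - δ := by linarith
  have hδγ : (0:ℝ) < δ + γ := by linarith
  have hx : (0:ℝ) < (δ + γ) / (γ * (1 - δ)) := by positivity
  set L := Real.log ((δ + γ) / (γ * (1 - δ))) with hL
  refine ⟨L / (d * (1 + γ)), ?_, ?_⟩
  · have hL0 : 0 ≤ L := Real.log_nonneg (by rw [le_div_iff₀ (by positivity)]; nlinarith)
    positivity
  · set t := L / (d * (1 + γ)) with htdef
    have htd : t * d = L / (1 + γ) := by rw [htdef]; field_simp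
    have htgd : t * γ * d = γ * L / (1 + γ) := by rw [htdef]; field_simp
    have htdd : t * (δ * d) = δ * L / (1 + γ) := by rw [htdef]; field_simp
    have hexpL : Real.exp L = (δ + γ) / (γ * (1 - δ)) := Real.exp_log hx
    have hphi : phi γ d t = Real.exp (-(γ * L / (1 + γ))) / (1 - δ) := by
      unfold phi
      rw [htd, htgd]
      have e1 : Real.exp (L / (1 + γ)) = Real.exp (-(γ * L / (1 + γ))) * Real.exp L := by
        rw [← Real.exp_add]
        congr 1
        field_simp
        ring
      rw [e1, hexpL]
      have hE := Real.exp_pos (-(γ * L / (1 + γ)))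
      field_simp
      ring
    have hlogr : L = Real.log ((δ + γ) / γ) - Real.log (1 - δ) := by
      rw [hL, Real.log_div hδγ.ne' (by positivity), Real.log_div hδγ.ne' hγ.ne',
        Real.log_mul hγ.ne' h1δ.ne']
      ring
    have hKL : binKL ((δ + γ) / (1 + γ)) (γ / (1 + γ))
        = (δ + γ) / (1 + γ) * Real.log ((δ + γ) / γ)
          + (1 - δ) / (1 + γ) * Real.log (1 - δ) := by
      unfold binKL
      have e1 : (δ + γ) / (1 + γ) / (γ / (1 + γ)) = (δ + γ) / γ := by
        field_simp
      have e2 : 1 - (δ + γ) / (1 + γ) = (1 - δ) / (1 + γ) := by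
        field_simp; ring
      have e3 : (1 - δ) / (1 + γ) / (1 - γ / (1 + γ)) = 1 - δ := by
        have h4 : 1 - γ / (1 + γ) = 1 / (1 + γ) := by field_simp; ring
        rw [h4]
        field_simp
      rw [e2, e1, e3]
    have e4 : Real.exp (-(γ * L / (1 + γ))) / (1 - δ)
        = Real.exp (-(γ * L / (1 + γ)) - Real.log (1 - δ)) := by
      rw [Real.exp_sub, Real.exp_log h1δ]
    rw [hphi, hKL, htdd, e4, ← Real.exp_add]
    congr 1
    rw [hlogr]
    field_simp
    ring

lemma phi_tendsto {γ d : ℝ} (hγ : 0 < γ) (hd : 0 < d) :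
    Filter.Tendsto (fun t => Real.exp (-(t * d)) * phi γ d t) Filter.atTop
      (nhds (γ / (1 + γ))) := by
  have h1γ : (0:ℝ) < 1 + γ := by linarith
  have hrw : ∀ t : ℝ, Real.exp (-(t * d)) * phi γ d t
      = (γ + Real.exp (-(t * (d * (1 + γ))))) / (1 + γ) := by
    intro t
    unfold phi
    have e1 : Real.exp (-(t * d)) * Real.exp (t * d) = 1 := by
      rw [← Real.exp_add]; simp
    have e2 : Real.exp (-(t * d)) * Real.exp (-(t * γ * d))
        = Real.exp (-(t * (d * (1 + γ)))) := by
      rw [← Real.exp_add]; ring_nf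
    field_simp
    linear_combination (norm := ring_nf) γ * e1 + e2
  have hbot : Filter.Tendsto (fun t : ℝ => -(t * (d * (1 + γ)))) Filter.atTop Filter.atBot := by
    apply Filter.tendsto_neg_atBot_iff.mpr
    exact Filter.Tendsto.atTop_mul_const (by positivity) Filter.tendsto_id
  have hexp0 : Filter.Tendsto (fun t : ℝ => Real.exp (-(t * (d * (1 + γ)))))
      Filter.atTop (nhds 0) := Real.tendsto_exp_atBot.comp hbot
  have := ((tendsto_const_nhds (x := γ)).add hexp0).div_const (1 + γ)
  rw [add_zero] at this
  exact Filter.Tendsto.congr (fun t => (hrw t).symm) this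

section Prob2
variable {Ω : Type*} {m0 : MeasurableSpace Ω} {μ : Measure Ω}
  [IsProbabilityMeasure μ] {ℱ : Filtration ℕ m0} {X : ℕ → Ω → ℝ}

lemma one_sided (hX : Martingale X ℱ μ) (n : ℕ) {γ d δ : ℝ}
    (hγ : 0 < γ) (hd : 0 < d) (hδ0 : 0 ≤ δ) (hδ1 : δ ≤ 1)
    (hbdd : ∀ k, 1 ≤ k → k ≤ n → ∀ᵐ ω ∂μ, |X k ω - X (k - 1) ω| ≤ d)
    (hvar : ∀ k, 1 ≤ k → k ≤ n →
      ∀ᵐ ω ∂μ, (μ[fun ω' => (X k ω' - X (k - 1) ω') ^ 2 | ℱ (k - 1)]) ω ≤ γ * d ^ 2) :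
    μ {ω | δ * d * n ≤ X n ω - X 0 ω} ≤
      ENNReal.ofReal
        (Real.exp (-(n : ℝ) * binKL ((δ + γ) / (1 + γ)) (γ / (1 + γ)))) := by
  rcases lt_or_eq_of_le hδ1 with hlt | heq
  · obtain ⟨t, ht0, heq⟩ := opt_t hγ hd hδ0 hlt
    have hch := chernoff_aux hX n hγ hd hbdd hvar
      (α := δ * d) (mul_nonneg hδ0 hd.le) ht0
    refine hch.trans (le_of_eq ?_)
    congr 1
    rw [heq, ← Real.exp_nat_mul]
    congr 1
    ring
  · subst heq
    -- δ = 1 : take the limit t → ∞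
    have hq : (0:ℝ) < γ / (1 + γ) := by positivity
    have hKL1 : binKL ((1 + γ) / (1 + γ)) (γ / (1 + γ)) = -Real.log (γ / (1 + γ)) := by
      unfold binKL
      rw [div_self (by positivity : (1:ℝ) + γ ≠ 0)]
      simp [sub_self, one_div, Real.log_inv]
      rw [← Real.log_inv, inv_div]
    have hlim : Filter.Tendsto
        (fun t => ENNReal.ofReal ((Real.exp (-(t * (1 * d))) * phi γ d t) ^ n))
        Filter.atTop (nhds (ENNReal.ofReal ((γ / (1 + γ)) ^ n))) := by
      have h1 : Filter.Tendsto (fun t => Real.exp (-(t * (1 * d))) * phi γ d t)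
          Filter.atTop (nhds (γ / (1 + γ))) := by
        simpa using phi_tendsto hγ hd
      exact (ENNReal.continuous_ofReal.tendsto _).comp (h1.pow n)
    have hub : ∀ᶠ t in Filter.atTop,
        μ {ω | 1 * d * n ≤ X n ω - X 0 ω} ≤
          ENNReal.ofReal ((Real.exp (-(t * (1 * d))) * phi γ d t) ^ n) := by
      filter_upwards [Filter.eventually_ge_atTop (0:ℝ)] with t ht0
      exact chernoff_aux hX n hγ hd hbdd hvar
        (α := 1 * d) (by linarith) ht0
    have hle := ge_of_tendsto hlim hub
    refine hle.trans (le_of_eq ?_)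
    congr 1
    rw [hKL1]
    rw [show -(n:ℝ) * -Real.log (γ / (1 + γ)) = (n:ℝ) * Real.log (γ / (1 + γ)) by ring,
      Real.exp_nat_mul, Real.exp_log hq]

end Prob2


/-- Refined Azuma inequality: for a martingale with jumps bounded by `d` and
conditional variances bounded by `σ²`, with `γ = σ²/d²`, `δ = α/d ≤ 1`,
`P(|Xₙ − X₀| ≥ αn) ≤ 2 exp(−n D((δ+γ)/(1+γ) ‖ γ/(1+γ)))`. -/
theorem stmt_5 {Ω : Type*} {m0 : MeasurableSpace Ω} {μ : Measure Ω}
    [IsProbabilityMeasure μ] {ℱ : Filtration ℕ m0} {X : ℕ → Ω → ℝ}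
    (hX : Martingale X ℱ μ) (n : ℕ) (d σ : ℝ) (hd : 0 < d) (hσ : 0 < σ)
    (hbdd : ∀ k, 1 ≤ k → k ≤ n → ∀ᵐ ω ∂μ, |X k ω - X (k - 1) ω| ≤ d)
    (hvar : ∀ k, 1 ≤ k → k ≤ n →
      ∀ᵐ ω ∂μ, (μ[fun ω' => (X k ω' - X (k - 1) ω') ^ 2 | ℱ (k - 1)]) ω ≤ σ ^ 2)
    (α : ℝ) (hα : 0 ≤ α) (γ δ : ℝ) (hγ : γ = σ ^ 2 / d ^ 2) (hδ : δ = α / d)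
    (hδ1 : δ ≤ 1) :
    μ {ω | α * n ≤ |X n ω - X 0 ω|} ≤
      ENNReal.ofReal
        (2 * Real.exp (-(n : ℝ) * binKL ((δ + γ) / (1 + γ)) (γ / (1 + γ)))) := by
  have hγ0 : 0 < γ := by rw [hγ]; positivity
  have hδ0 : 0 ≤ δ := by rw [hδ]; positivity
  have hαδ : α = δ * d := by rw [hδ]; field_simp
  have hσγ : σ ^ 2 = γ * d ^ 2 := by rw [hγ]; field_simp
  have hvar' : ∀ k, 1 ≤ k → k ≤ n →
      ∀ᵐ ω ∂μ, (μ[fun ω' => (X k ω' - X (k - 1) ω') ^ 2 | ℱ (k - 1)]) ω ≤ γ * d ^ 2 := by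
    intro k h1 h2
    filter_upwards [hvar k h1 h2] with ω hω
    rw [← hσγ]
    exact hω
  have hXneg : Martingale (-X) ℱ μ := hX.neg
  have hbddneg : ∀ k, 1 ≤ k → k ≤ n →
      ∀ᵐ ω ∂μ, |(-X) k ω - (-X) (k - 1) ω| ≤ d := by
    intro k h1 h2
    filter_upwards [hbdd k h1 h2] with ω hω
    simp only [Pi.neg_apply]
    rw [show -X k ω - -X (k - 1) ω = -(X k ω - X (k - 1) ω) by ring, abs_neg]
    exact hω
  have hvarneg : ∀ k, 1 ≤ k → k ≤ n →
      ∀ᵐ ω ∂μ, (μ[fun ω' => ((-X) k ω' - (-X) (k - 1) ω') ^ 2 | ℱ (k - 1)]) ω ≤ γ * d ^ 2 := by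
    intro k h1 h2
    have he : (fun ω' => ((-X) k ω' - (-X) (k - 1) ω') ^ 2)
        = (fun ω' => (X k ω' - X (k - 1) ω') ^ 2) := by
      funext ω'
      simp only [Pi.neg_apply]
      ring
    rw [he]
    exact hvar' k h1 h2
  have h1 := one_sided hX n hγ0 hd hδ0 hδ1 hbdd hvar'
  have h2 := one_sided hXneg n hγ0 hd hδ0 hδ1 hbddneg hvarneg
  have hincl : {ω | α * n ≤ |X n ω - X 0 ω|} ⊆
      {ω | δ * d * (n:ℝ) ≤ X n ω - X 0 ω} ∪
      {ω | δ * d * (n:ℝ) ≤ (-X) n ω - (-X) 0 ω} := by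
    intro ω hω
    simp only [Set.mem_setOf_eq, Set.mem_union, Pi.neg_apply]
    simp only [Set.mem_setOf_eq, hαδ] at hω
    rcases le_abs.mp hω with h | h
    · exact Or.inl h
    · right
      rw [show -X n ω - -X 0 ω = -(X n ω - X 0 ω) by ring]
      exact h
  calc μ {ω | α * n ≤ |X n ω - X 0 ω|}
      ≤ μ ({ω | δ * d * (n:ℝ) ≤ X n ω - X 0 ω} ∪
          {ω | δ * d * (n:ℝ) ≤ (-X) n ω - (-X) 0 ω}) := measure_mono hincl
    _ ≤ μ {ω | δ * d * (n:ℝ) ≤ X n ω - X 0 ω} +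
        μ {ω | δ * d * (n:ℝ) ≤ (-X) n ω - (-X) 0 ω} := measure_union_le _ _
    _ ≤ ENNReal.ofReal (Real.exp (-(n : ℝ) * binKL ((δ + γ) / (1 + γ)) (γ / (1 + γ))))
        + ENNReal.ofReal (Real.exp (-(n : ℝ) * binKL ((δ + γ) / (1 + γ)) (γ / (1 + γ)))) :=
        add_le_add h1 h2
    _ = ENNReal.ofReal
        (2 * Real.exp (-(n : ℝ) * binKL ((δ + γ) / (1 + γ)) (γ / (1 + γ)))) := by
        rw [← ENNReal.ofReal_add (Real.exp_nonneg _) (Real.exp_nonneg _)]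
        congr 1
        ring
end

section
/- Let {P_θ} for θ ∈ an open interval Θ ⊆ ℝ be a family of strictly positive probability mass functions on a finite alphabet X, with θ ↦ P_θ(x) twice continuously differentiable for each x. Then lim_{θ'→θ} C(P_θ, P_{θ'})/(θ − θ')² = J(θ)/8, where C(P,Q) = −min_{0≤t≤1} ln(Σ_x P(x)^{1−t} Q(x)^t) is the Chernoff information and J(θ) is the Fisher information. -/
open Filter

/-- Chernoff information `C(P,Q) = −min_{0≤t≤1} ln(Σ_x P(x)^{1−t} Q(x)^t)`. -/
noncomputable def chernoffInfo {𝒳 : Type*} [Fintype 𝒳] (P Q : 𝒳 → ℝ) : ℝ :=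
  -sInf ((fun t : ℝ => Real.log (∑ x, P x ^ (1 - t) * Q x ^ t)) '' Set.Icc 0 1)

/-- Quadratic bound via two applications of the mean value inequality. -/
lemma quad_bound_aux {φ φ' φ'' : ℝ → ℝ} {a b ε : ℝ} {K : Set ℝ} (hK : Convex ℝ K)
    (ha : a ∈ K) (hb : b ∈ K)
    (h1 : ∀ s ∈ K, HasDerivWithinAt φ (φ' s) K s)
    (h2 : ∀ s ∈ K, HasDerivWithinAt φ' (φ'' s) K s)
    (hφa : φ a = 0) (hφ'a : φ' a = 0)
    (hbd : ∀ s ∈ K, |φ'' s| ≤ ε) :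
    |φ b| ≤ ε * (b - a) ^ 2 := by
  set L := Set.uIcc a b with hL
  have hLK : L ⊆ K := hK.ordConnected.uIcc_subset ha hb
  have hLc : Convex ℝ L := convex_uIcc a b
  have haL : a ∈ L := Set.left_mem_uIcc
  have hbL : b ∈ L := Set.right_mem_uIcc
  have hd2 : ∀ s ∈ L, HasDerivWithinAt φ' (φ'' s) L s :=
    fun s hs => (h2 s (hLK hs)).mono hLK
  have hd1 : ∀ s ∈ L, HasDerivWithinAt φ (φ' s) L s :=
    fun s hs => (h1 s (hLK hs)).mono hLK
  have hε : 0 ≤ ε := le_trans (abs_nonneg _) (hbd a ha)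
  have step1 : ∀ s ∈ L, |φ' s| ≤ ε * |b - a| := by
    intro s hs
    have h := hLc.norm_image_sub_le_of_norm_hasDerivWithin_le hd2
      (fun x hx => hbd x (hLK hx)) haL hs
    rw [hφ'a, sub_zero] at h
    have hsa : |s - a| ≤ |b - a| := by
      rcases Set.mem_uIcc.1 hs with ⟨h₁, h₂⟩ | ⟨h₁, h₂⟩ <;>
      · rw [abs_sub_le_iff]
        constructor <;> linarith [le_abs_self (b - a), neg_le_abs (b - a), abs_nonneg (b - a)]
    exact h.trans (mul_le_mul_of_nonneg_left hsa hε)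
  have h := hLc.norm_image_sub_le_of_norm_hasDerivWithin_le hd1 step1 haL hbL
  rw [hφa, sub_zero] at h
  calc |φ b| ≤ ε * |b - a| * ‖b - a‖ := h
  _ = ε * (b - a) ^ 2 := by
    rw [Real.norm_eq_abs, mul_assoc, ← abs_mul,
      show (b - a) * (b - a) = (b - a) ^ 2 by ring, abs_of_nonneg (sq_nonneg _)]

set_option maxHeartbeats 2000000 in
/-- For a smooth family of strictly positive pmfs on a finite alphabet,
`C(P_θ, P_{θ'})/(θ − θ')² → J(θ)/8` as `θ' → θ`, where `J` is the Fisher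
information. -/
theorem stmt_18 {𝒳 : Type*} [Fintype 𝒳] (Θ : Set ℝ) (hΘopen : IsOpen Θ)
    (hΘconn : Θ.OrdConnected) (P : ℝ → 𝒳 → ℝ)
    (hpos : ∀ θ ∈ Θ, ∀ x, 0 < P θ x) (hsum : ∀ θ ∈ Θ, ∑ x, P θ x = 1)
    (hsmooth : ∀ x, ContDiffOn ℝ 2 (fun θ => P θ x) Θ)
    (θ : ℝ) (hθ : θ ∈ Θ) :
    Tendsto (fun θ' => chernoffInfo (P θ) (P θ') / (θ - θ') ^ 2)
      (nhdsWithin θ (Θ \ {θ}))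
      (nhds ((∑ x, P θ x * (deriv (fun s => Real.log (P s x)) θ) ^ 2) / 8)) := by
  classical
  -- basic setup
  have hXne : Nonempty 𝒳 := by
    by_contra h
    have h0 : (∑ x : 𝒳, P θ x) = 0 := Finset.sum_eq_zero fun x _ => absurd ⟨x⟩ h
    rw [hsum θ hθ] at h0; norm_num at h0
  obtain ⟨δ₀, hδ₀pos, hδ₀⟩ : ∃ δ₀ > 0, Metric.closedBall θ δ₀ ⊆ Θ :=
    (Metric.nhds_basis_closedBall.mem_iff).1 (hΘopen.mem_nhds hθ)
  -- derivatives of the family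
  set D1 : 𝒳 → ℝ → ℝ := fun x s => deriv (fun u => P u x) s with hD1def
  set D2 : 𝒳 → ℝ → ℝ := fun x s => deriv (D1 x) s with hD2def
  have hD1 : ∀ x, ∀ s ∈ Θ, HasDerivAt (fun u => P u x) (D1 x s) s := by
    intro x s hs
    exact (((hsmooth x).differentiableOn (by norm_num)).differentiableAt
      (hΘopen.mem_nhds hs)).hasDerivAt
  have hcd1 : ∀ x, ContDiffOn ℝ 1 (D1 x) Θ := fun x =>
    (hsmooth x).deriv_of_isOpen hΘopen (by norm_num)
  have hD2 : ∀ x, ∀ s ∈ Θ, HasDerivAt (D1 x) (D2 x s) s := by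
    intro x s hs
    exact (((hcd1 x).differentiableOn (by norm_num)).differentiableAt
      (hΘopen.mem_nhds hs)).hasDerivAt
  have hD2c : ∀ x, ContinuousOn (D2 x) Θ := fun x =>
    ((hcd1 x).deriv_of_isOpen (m := 0) hΘopen (by norm_num)).continuousOn
  have hD1c : ∀ x, ContinuousOn (D1 x) Θ := fun x => (hcd1 x).continuousOn
  have hPc : ∀ x, ContinuousOn (fun s => P s x) Θ := fun x => (hsmooth x).continuousOn
  have hsum1 : ∀ s ∈ Θ, ∑ x, D1 x s = 0 := by
    intro s hs
    have h1 : HasDerivAt (fun u => ∑ x, P u x) (∑ x, D1 x s) s :=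
      HasDerivAt.fun_sum fun x _ => hD1 x s hs
    have h2 : HasDerivAt (fun u => ∑ x, P u x) 0 s := by
      refine (hasDerivAt_const s (1 : ℝ)).congr_of_eventuallyEq ?_
      filter_upwards [hΘopen.mem_nhds hs] with u hu using (hsum u hu)
    exact h1.unique h2
  have hsum2 : ∑ x, D2 x θ = 0 := by
    have h1 : HasDerivAt (fun u => ∑ x, D1 x u) (∑ x, D2 x θ) θ :=
      HasDerivAt.fun_sum fun x _ => hD2 x θ hθ
    have h2 : HasDerivAt (fun u => ∑ x, D1 x u) 0 θ := by
      refine (hasDerivAt_const θ (0 : ℝ)).congr_of_eventuallyEq ?_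
      filter_upwards [hΘopen.mem_nhds hθ] with u hu using (hsum1 u hu)
    exact h1.unique h2
  -- the two-variable functions
  set G : ℝ → ℝ → ℝ := fun t s => ∑ x, P θ x ^ (1 - t) * P s x ^ t with hGdef
  set G1 : ℝ → ℝ → ℝ := fun t s =>
    ∑ x, P θ x ^ (1 - t) * (D1 x s * t * P s x ^ (t - 1)) with hG1def
  set G2 : ℝ → ℝ → ℝ := fun t s =>
    ∑ x, P θ x ^ (1 - t) *
      (D2 x s * t * P s x ^ (t - 1) +
        D1 x s * t * (D1 x s * (t - 1) * P s x ^ (t - 1 - 1))) with hG2def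
  have hGpos : ∀ t : ℝ, ∀ s ∈ Θ, 0 < G t s := by
    intro t s hs
    refine Finset.sum_pos (fun x _ => ?_) Finset.univ_nonempty
    exact mul_pos (Real.rpow_pos_of_pos (hpos θ hθ x) _)
      (Real.rpow_pos_of_pos (hpos s hs x) _)
  have hG1 : ∀ t : ℝ, ∀ s ∈ Θ, HasDerivAt (fun u => G t u) (G1 t s) s := by
    intro t s hs
    refine HasDerivAt.fun_sum fun x _ => ?_
    exact (((hD1 x s hs).rpow_const (Or.inl (ne_of_gt (hpos s hs x)))).const_mul _)
  have hG2 : ∀ t : ℝ, ∀ s ∈ Θ, HasDerivAt (fun u => G1 t u) (G2 t s) s := by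
    intro t s hs
    refine HasDerivAt.fun_sum fun x _ => ?_
    refine HasDerivAt.const_mul _ ?_
    have h1 : HasDerivAt (fun u => D1 x u * t) (D2 x s * t) s := (hD2 x s hs).mul_const t
    have h2 : HasDerivAt (fun u => P u x ^ (t - 1)) (D1 x s * (t - 1) * P s x ^ (t - 1 - 1)) s :=
      (hD1 x s hs).rpow_const (Or.inl (ne_of_gt (hpos s hs x)))
    exact h1.mul h2
  set J : ℝ := ∑ x, (D1 x θ) ^ 2 / P θ x with hJdef
  have hJnn : 0 ≤ J := by
    rw [hJdef]
    exact Finset.sum_nonneg fun x _ => div_nonneg (sq_nonneg _) (le_of_lt (hpos θ hθ x))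
  set F : ℝ → ℝ → ℝ := fun t s => Real.log (G t s) with hFdef
  set F1 : ℝ → ℝ → ℝ := fun t s => G1 t s / G t s with hF1def
  set F2 : ℝ → ℝ → ℝ := fun t s =>
    (G2 t s * G t s - G1 t s * G1 t s) / G t s ^ 2 with hF2def
  have hF1 : ∀ t : ℝ, ∀ s ∈ Θ, HasDerivAt (fun u => F t u) (F1 t s) s :=
    fun t s hs => (hG1 t s hs).log (ne_of_gt (hGpos t s hs))
  have hF2 : ∀ t : ℝ, ∀ s ∈ Θ, HasDerivAt (fun u => F1 t u) (F2 t s) s :=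
    fun t s hs => (hG2 t s hs).div (hG1 t s hs) (ne_of_gt (hGpos t s hs))
  -- values at θ
  have hrpow_add : ∀ (x : 𝒳) (a b : ℝ), P θ x ^ a * P θ x ^ b = P θ x ^ (a + b) :=
    fun x a b => (Real.rpow_add (hpos θ hθ x) a b).symm
  have hGθ : ∀ t : ℝ, G t θ = 1 := by
    intro t
    rw [hGdef]
    simp only [hrpow_add]
    norm_num
    exact hsum θ hθ
  have hG1θ : ∀ t : ℝ, G1 t θ = 0 := by
    intro t
    rw [hG1def]
    have he : ∀ x : 𝒳, P θ x ^ (1 - t) * (D1 x θ * t * P θ x ^ (t - 1)) = t * D1 x θ := by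
      intro x
      rw [show P θ x ^ (1 - t) * (D1 x θ * t * P θ x ^ (t - 1))
          = D1 x θ * t * (P θ x ^ (1 - t) * P θ x ^ (t - 1)) by ring, hrpow_add]
      rw [show (1 : ℝ) - t + (t - 1) = 0 by ring, Real.rpow_zero]
      ring
    simp only [he]
    rw [← Finset.mul_sum, hsum1 θ hθ, mul_zero]
  have hG2θ : ∀ t : ℝ, G2 t θ = t * (t - 1) * J := by
    intro t
    rw [hG2def]
    have he : ∀ x : 𝒳, P θ x ^ (1 - t) *
        (D2 x θ * t * P θ x ^ (t - 1) +
          D1 x θ * t * (D1 x θ * (t - 1) * P θ x ^ (t - 1 - 1)))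
        = t * D2 x θ + t * (t - 1) * ((D1 x θ) ^ 2 / P θ x) := by
      intro x
      have h1 : P θ x ^ (1 - t) * P θ x ^ (t - 1) = 1 := by
        rw [hrpow_add, show (1 : ℝ) - t + (t - 1) = 0 by ring, Real.rpow_zero]
      have h2 : P θ x ^ (1 - t) * P θ x ^ (t - 1 - 1) = (P θ x)⁻¹ := by
        rw [hrpow_add, show (1 : ℝ) - t + (t - 1 - 1) = -1 by ring, Real.rpow_neg_one]
      calc P θ x ^ (1 - t) *
          (D2 x θ * t * P θ x ^ (t - 1) +
            D1 x θ * t * (D1 x θ * (t - 1) * P θ x ^ (t - 1 - 1)))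
          = D2 x θ * t * (P θ x ^ (1 - t) * P θ x ^ (t - 1))
            + D1 x θ ^ 2 * t * (t - 1) * (P θ x ^ (1 - t) * P θ x ^ (t - 1 - 1)) := by ring
        _ = t * D2 x θ + t * (t - 1) * ((D1 x θ) ^ 2 / P θ x) := by
            rw [h1, h2]; field_simp
    simp only [he]
    rw [Finset.sum_add_distrib, ← Finset.mul_sum, ← Finset.mul_sum, hsum2, mul_zero, zero_add,
      hJdef]
  have hFθ : ∀ t : ℝ, F t θ = 0 := fun t => by rw [hFdef]; simp [hGθ t]
  have hF1θ : ∀ t : ℝ, F1 t θ = 0 := fun t => by rw [hF1def]; simp [hGθ t, hG1θ t]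
  have hF2θ : ∀ t : ℝ, F2 t θ = t * (t - 1) * J := fun t => by
    rw [hF2def]; simp [hGθ t, hG1θ t, hG2θ t]
  -- Fisher information identification
  have hJeq : (∑ x, P θ x * (deriv (fun s => Real.log (P s x)) θ) ^ 2) = J := by
    rw [hJdef]
    refine Finset.sum_congr rfl fun x _ => ?_
    have hd : deriv (fun s => Real.log (P s x)) θ = D1 x θ / P θ x :=
      ((hD1 x θ hθ).log (ne_of_gt (hpos θ hθ x))).deriv
    rw [hd, div_pow]
    field_simp [(hpos θ hθ x).ne']
  -- joint continuity of F2
  have hF2ca : ∀ q : ℝ × ℝ, q.2 ∈ Θ →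
      ContinuousAt (fun q : ℝ × ℝ => F2 q.1 q.2) q := by
    intro q hq
    have hPca : ∀ x, ContinuousAt (fun q : ℝ × ℝ => P q.2 x) q :=
      fun x => ((hPc x).continuousAt (hΘopen.mem_nhds hq)).comp continuousAt_snd
    have hD1ca : ∀ x, ContinuousAt (fun q : ℝ × ℝ => D1 x q.2) q :=
      fun x => ((hD1c x).continuousAt (hΘopen.mem_nhds hq)).comp continuousAt_snd
    have hD2ca : ∀ x, ContinuousAt (fun q : ℝ × ℝ => D2 x q.2) q :=
      fun x => ((hD2c x).continuousAt (hΘopen.mem_nhds hq)).comp continuousAt_snd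
    have hPne : ∀ x, P q.2 x ≠ 0 := fun x => ne_of_gt (hpos q.2 hq x)
    have hA : ∀ x, ContinuousAt (fun q : ℝ × ℝ => P θ x ^ (1 - q.1)) q :=
      fun x => continuousAt_const.rpow (continuousAt_const.sub continuousAt_fst)
        (Or.inl (ne_of_gt (hpos θ hθ x)))
    have hB' : ∀ (x) (e : ℝ × ℝ → ℝ), ContinuousAt e q →
        ContinuousAt (fun q : ℝ × ℝ => P q.2 x ^ e q) q :=
      fun x e he => (hPca x).rpow he (Or.inl (hPne x))
    have hGc : ContinuousAt (fun q : ℝ × ℝ => G q.1 q.2) q := by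
      rw [hGdef]
      exact tendsto_finset_sum _ fun x _ => (hA x).mul (hB' x _ continuousAt_fst)
    have hG1c : ContinuousAt (fun q : ℝ × ℝ => G1 q.1 q.2) q := by
      rw [hG1def]
      exact tendsto_finset_sum _ fun x _ =>
        (hA x).mul (((hD1ca x).mul continuousAt_fst).mul
          (hB' x _ (continuousAt_fst.sub continuousAt_const)))
    have hG2c : ContinuousAt (fun q : ℝ × ℝ => G2 q.1 q.2) q := by
      rw [hG2def]
      refine tendsto_finset_sum _ fun x _ => (hA x).mul (ContinuousAt.add ?_ ?_)
      · exact ((hD2ca x).mul continuousAt_fst).mul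
          (hB' x _ (continuousAt_fst.sub continuousAt_const))
      · exact ((hD1ca x).mul continuousAt_fst).mul
          (((hD1ca x).mul (continuousAt_fst.sub continuousAt_const)).mul
            (hB' x _ ((continuousAt_fst.sub continuousAt_const).sub continuousAt_const)))
    rw [hF2def]
    exact ((hG2c.mul hGc).sub (hG1c.mul hG1c)).div (hGc.pow 2)
      (pow_ne_zero _ (ne_of_gt (hGpos q.1 q.2 hq)))
  -- uniform continuity argument
  have hKΘ : Set.Icc (θ - δ₀) (θ + δ₀) ⊆ Θ := by
    intro s hs
    apply hδ₀
    rw [Metric.mem_closedBall, Real.dist_eq, abs_sub_le_iff]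
    exact ⟨by linarith [hs.2], by linarith [hs.1]⟩
  have key : ∀ ε > (0 : ℝ), ∃ δ > (0 : ℝ), δ ≤ δ₀ ∧
      ∀ t ∈ Set.Icc (0 : ℝ) 1, ∀ s : ℝ, |s - θ| ≤ δ → |F2 t s - t * (t - 1) * J| ≤ ε := by
    intro ε hε
    set W : Set (ℝ × ℝ) := Set.Icc (0 : ℝ) 1 ×ˢ Set.Icc (θ - δ₀) (θ + δ₀) with hWdef
    have hWcomp : IsCompact W := isCompact_Icc.prod isCompact_Icc
    have hWcont : ContinuousOn (fun q : ℝ × ℝ => F2 q.1 q.2) W := fun q hq =>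
      (hF2ca q (hKΘ hq.2)).continuousWithinAt
    have huc := Metric.uniformContinuousOn_iff.1
      (hWcomp.uniformContinuousOn_of_continuous hWcont) ε hε
    obtain ⟨δ', hδ'pos, hδ'⟩ := huc
    refine ⟨min (δ' / 2) δ₀, lt_min (by linarith) hδ₀pos, min_le_right _ _, ?_⟩
    intro t ht s hsθ
    have hsδ₀ : |s - θ| ≤ δ₀ := hsθ.trans (min_le_right _ _)
    have hsW : (t, s) ∈ W := by
      refine ⟨ht, ?_⟩
      rw [Set.mem_Icc]
      rw [abs_sub_le_iff] at hsδ₀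
      exact ⟨by linarith [hsδ₀.2], by linarith [hsδ₀.1]⟩
    have hθW : (t, θ) ∈ W := by
      refine ⟨ht, ?_⟩
      rw [Set.mem_Icc]
      constructor <;> linarith
    have hdist : dist ((t, s) : ℝ × ℝ) (t, θ) < δ' := by
      rw [Prod.dist_eq]
      simp only [dist_self]
      rw [Real.dist_eq]
      have : |s - θ| ≤ δ' / 2 := hsθ.trans (min_le_left _ _)
      calc max 0 |s - θ| ≤ δ' / 2 := max_le (by linarith) this
      _ < δ' := by linarith
    have := hδ' (t, s) hsW (t, θ) hθW hdist
    rw [Real.dist_eq] at this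
    rw [← hF2θ t]
    exact le_of_lt this
  -- main tendsto proof
  rw [Metric.tendsto_nhdsWithin_nhds]
  intro ε hε
  obtain ⟨δ, hδpos, hδle, hδ⟩ := key (ε / 2) (by linarith)
  refine ⟨δ, hδpos, ?_⟩
  intro θ' hθ'mem hθ'dist
  obtain ⟨hθ'Θ, hθ'ne⟩ := hθ'mem
  have hθ'ne' : θ' ≠ θ := hθ'ne
  rw [Real.dist_eq] at hθ'dist
  set h2 : ℝ := (θ - θ') ^ 2 with hh2def
  have hh2pos : 0 < h2 := by
    rw [hh2def]
    have : θ - θ' ≠ 0 := sub_ne_zero.2 (Ne.symm hθ'ne')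
    positivity
  -- the interval for the quadratic bound
  set K' : Set ℝ := Set.Icc (θ - δ) (θ + δ) with hK'def
  have hK'Θ : K' ⊆ Θ := by
    intro s hs
    apply hKΘ
    rw [Set.mem_Icc]
    exact ⟨by linarith [hs.1], by linarith [hs.2]⟩
  have hθK' : θ ∈ K' := by
    rw [hK'def, Set.mem_Icc]; constructor <;> linarith
  have hθ'K' : θ' ∈ K' := by
    rw [hK'def, Set.mem_Icc]
    rw [abs_sub_lt_iff] at hθ'dist
    constructor <;> linarith [hθ'dist.1, hθ'dist.2]
  -- per-t quadratic estimate
  have hquad : ∀ t ∈ Set.Icc (0 : ℝ) 1,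
      |F t θ' - t * (t - 1) * J / 2 * (θ' - θ) ^ 2| ≤ ε / 2 * (θ' - θ) ^ 2 := by
    intro t ht
    have hphi1 : ∀ s ∈ K', HasDerivWithinAt
        (fun s => F t s - t * (t - 1) * J / 2 * (s - θ) ^ 2)
        (F1 t s - t * (t - 1) * J * (s - θ)) K' s := by
      intro s hs
      have hpoly : HasDerivAt (fun s : ℝ => t * (t - 1) * J / 2 * (s - θ) ^ 2)
          (t * (t - 1) * J * (s - θ)) s := by
        have hb := (((hasDerivAt_id s).sub_const θ).pow 2).const_mul (t * (t - 1) * J / 2)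
        convert hb using 1 <;> first | rfl | (push_cast; simp only [id_eq]; ring) | (funext y; simp only [id_eq]; ring) | ring
      exact ((hF1 t s (hK'Θ hs)).sub hpoly).hasDerivWithinAt
    have hphi2 : ∀ s ∈ K', HasDerivWithinAt
        (fun s => F1 t s - t * (t - 1) * J * (s - θ))
        (F2 t s - t * (t - 1) * J) K' s := by
      intro s hs
      have hpoly : HasDerivAt (fun s : ℝ => t * (t - 1) * J * (s - θ))
          (t * (t - 1) * J) s := by
        have hb := ((hasDerivAt_id s).sub_const θ).const_mul (t * (t - 1) * J)
        convert hb using 1 <;> first | rfl | ring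
      exact ((hF2 t s (hK'Θ hs)).sub hpoly).hasDerivWithinAt
    have hbd : ∀ s ∈ K', |F2 t s - t * (t - 1) * J| ≤ ε / 2 := by
      intro s hs
      refine hδ t ht s ?_
      rw [hK'def, Set.mem_Icc] at hs
      rw [abs_sub_le_iff]
      exact ⟨by linarith [hs.2], by linarith [hs.1]⟩
    have := quad_bound_aux (convex_Icc _ _) hθK' hθ'K' hphi1 hphi2
      (by simp [hFθ t]) (by simp [hF1θ t]) hbd
    simpa using this
  -- conclude: bound the infimum
  have hsq : (θ' - θ) ^ 2 = h2 := by rw [hh2def]; ring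
  rw [hsq] at hquad
  set S : Set ℝ := (fun t => F t θ') '' Set.Icc (0 : ℝ) 1 with hSdef
  have hCeq : chernoffInfo (P θ) (P θ') = -sInf S := rfl
  have hSne : S.Nonempty :=
    ⟨F 0 θ', Set.mem_image_of_mem _ (by norm_num : (0 : ℝ) ∈ Set.Icc (0 : ℝ) 1)⟩
  have hlow : ∀ y ∈ S, -(J * h2) / 8 - ε / 2 * h2 ≤ y := by
    rintro y ⟨t, ht, rfl⟩
    have h := (abs_le.1 (hquad t ht)).1
    nlinarith [mul_nonneg (mul_nonneg hJnn (sq_nonneg (2 * t - 1))) hh2pos.le]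
  have hbdd : BddBelow S := ⟨_, hlow⟩
  have hinf_ge : -(J * h2) / 8 - ε / 2 * h2 ≤ sInf S := le_csInf hSne hlow
  have hmem : F (1 / 2 : ℝ) θ' ∈ S :=
    Set.mem_image_of_mem _ (by norm_num : (1 / 2 : ℝ) ∈ Set.Icc (0 : ℝ) 1)
  have hup : F (1 / 2 : ℝ) θ' ≤ -(J * h2) / 8 + ε / 2 * h2 := by
    have h := (abs_le.1 (hquad (1 / 2) (by norm_num))).2
    nlinarith
  have hinf_le : sInf S ≤ -(J * h2) / 8 + ε / 2 * h2 := (csInf_le hbdd hmem).trans hup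
  rw [Real.dist_eq, hJeq, hCeq]
  have heq : -sInf S / h2 - J / 8 = (-sInf S - J / 8 * h2) / h2 := by
    field_simp
  rw [heq, abs_div, abs_of_pos hh2pos, div_lt_iff₀ hh2pos]
  calc |-sInf S - J / 8 * h2| ≤ ε / 2 * h2 := by
        rw [abs_le]; constructor <;> nlinarith
  _ < ε * h2 := by nlinarith
end
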